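/- Let k be a field, and let φ1, φ2 be continuous k-algebra automorphisms of k[[t]] (substitutions φi(t) ∈ t·k[[t]] with unit linear coefficient). The induced automorphism (g1,g2) ↦ (g1∘φ1, g2∘φ2) of k[[t]] × k[[t]] maps the oscnode algebra R = {(g1,g2) : g1 ≡ g2 mod t^3} into itself if and only if φ1(t) ≡ φ2(t) mod t^3. -/

import Mathlib

open PowerSeries

variable (k : Type*) [Field k]

/-- Pairs of power series whose coefficients agree in all degrees `< n`;
for `n = 3` this is the oscnode (A₅) algebra. -/
noncomputable def agree (n : ℕ) : Submodule k (PowerSeries k × PowerSeries k) where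
  carrier := {p | ∀ i < n, coeff (R := k) i p.1 = coeff (R := k) i p.2}
  add_mem' := by
    intro a b ha hb i hi
    simp [ha i hi, hb i hi]
  zero_mem' := by intro i hi; simp
  smul_mem' := by
    intro c p hp i hi
    simp [hp i hi]

/-- Substitution `g ↦ g(u)` for a power series `u` with zero constant term. -/
noncomputable def subst (u g : PowerSeries k) : PowerSeries k :=
  PowerSeries.mk fun m =>
    coeff (R := k) m (∑ n ∈ Finset.range (m + 1), coeff (R := k) n g • u ^ n)

lemma coeff_subst' (u g : PowerSeries k) (i : ℕ) :
    coeff (R := k) i (subst k u g) =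
      ∑ n ∈ Finset.range (i + 1), coeff (R := k) n g * coeff (R := k) i (u ^ n) := by
  simp [_root_.subst, coeff_mk, map_sum]

lemma coeff_pow_congr (u₁ u₂ : PowerSeries k)
    (h : ∀ i < 3, coeff (R := k) i u₁ = coeff (R := k) i u₂) (n : ℕ) :
    ∀ i < 3, coeff (R := k) i (u₁ ^ n) = coeff (R := k) i (u₂ ^ n) := by
  induction n with
  | zero => intro i hi; simp
  | succ n ih =>
    intro i hi
    rw [pow_succ, pow_succ, coeff_mul, coeff_mul]
    apply Finset.sum_congr rfl
    intro p hp
    rw [Finset.HasAntidiagonal.mem_antidiagonal] at hp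
    rw [ih p.1 (by omega), h p.2 (by omega)]

lemma coeff_subst_X (u : PowerSeries k) (h0 : coeff (R := k) 0 u = 0) :
    ∀ i < 3, coeff (R := k) i (subst k u X) = coeff (R := k) i u := by
  intro i hi
  rw [coeff_subst']
  interval_cases i <;>
    simp [Finset.sum_range_succ, coeff_X, h0]

/-- the automorphism `(g₁,g₂) ↦ (g₁∘φ₁, g₂∘φ₂)` of `k[[t]] × k[[t]]`
induced by substitutions `φᵢ(t) = uᵢ ∈ t·k[[t]]` with unit linear coefficient
preserves the oscnode algebra iff `u₁ ≡ u₂ mod t³`. -/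
theorem stmt_11 (u₁ u₂ : PowerSeries k)
    (h₁0 : coeff (R := k) 0 u₁ = 0) (h₂0 : coeff (R := k) 0 u₂ = 0)
    (h₁1 : IsUnit (coeff (R := k) 1 u₁)) (h₂1 : IsUnit (coeff (R := k) 1 u₂)) :
    (∀ p ∈ agree k 3,
        ((subst k u₁ p.1, subst k u₂ p.2) : PowerSeries k × PowerSeries k) ∈ agree k 3) ↔
      ∀ i < 3, coeff (R := k) i u₁ = coeff (R := k) i u₂ := by
  constructor
  · intro H i hi
    have hX : ((X, X) : PowerSeries k × PowerSeries k) ∈ agree k 3 := by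
      intro j hj; rfl
    have := H (X, X) hX i hi
    simpa [coeff_subst_X k u₁ h₁0 i hi, coeff_subst_X k u₂ h₂0 i hi] using this
  · intro h p hp i hi
    simp only [coeff_subst']
    apply Finset.sum_congr rfl
    intro n hn
    rw [Finset.mem_range] at hn
    rw [hp n (by omega), coeff_pow_congr k u₁ u₂ h n i hi]
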